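/- Let H_1 and H_2 be numerical semigroups and suppose at least one of them is not symmetric. Then any gluing H = ⟨xH_1, yH_2⟩ of H_1 and H_2 is not almost symmetric. -/

import Mathlib

/-- A numerical semigroup, viewed as a set of integers: a set of nonnegative
integers containing 0, closed under addition, with finite complement in ℕ. -/
def IsNumericalSemigroup (S : Set ℤ) : Prop :=
  (∀ x ∈ S, 0 ≤ x) ∧ 0 ∈ S ∧ (∀ a ∈ S, ∀ b ∈ S, a + b ∈ S) ∧
    {z : ℤ | 0 ≤ z ∧ z ∉ S}.Finite

/-- The genus: the number of nonnegative integers not in `S`. -/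
noncomputable def genus (S : Set ℤ) : ℕ := {z : ℤ | 0 ≤ z ∧ z ∉ S}.ncard

/-- The Frobenius number: the largest integer not in `S`. -/
noncomputable def frob (S : Set ℤ) : ℤ := sSup {z : ℤ | z ∉ S}

/-- The set of pseudo-Frobenius numbers. -/
def PF (S : Set ℤ) : Set ℤ := {x : ℤ | x ∉ S ∧ ∀ h ∈ S, h ≠ 0 → x + h ∈ S}

/-- The type: the number of pseudo-Frobenius numbers. -/
noncomputable def typ (S : Set ℤ) : ℕ := (PF S).ncard

/-- The multiplicity: the smallest nonzero element of `S`. -/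
noncomputable def mult (S : Set ℤ) : ℤ := sInf {z : ℤ | z ∈ S ∧ z ≠ 0}

/-- The Apéry set of `S` with respect to `n`. -/
def apery (S : Set ℤ) (n : ℤ) : Set ℤ := {s ∈ S | s - n ∉ S}

/-- The dual `H* = M - M` of the maximal ideal `M = S \ {0}`. -/
def dual (S : Set ℤ) : Set ℤ :=
  {z : ℤ | ∀ m ∈ S, m ≠ 0 → z + m ∈ S ∧ z + m ≠ 0}

/-- Almost symmetric: `2 g(S) = F(S) + t(S)`. -/
def AlmostSymmetric (S : Set ℤ) : Prop := 2 * (genus S : ℤ) = frob S + (typ S : ℤ)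

/-- Symmetric: `2 g(S) = F(S) + 1`. -/
def SymmetricNS (S : Set ℤ) : Prop := 2 * (genus S : ℤ) = frob S + 1

/-- Pseudo-symmetric: `2 g(S) = F(S) + 2`. -/
def PseudoSymmetric (S : Set ℤ) : Prop := 2 * (genus S : ℤ) = frob S + 2

/-- The set of minimal generators of `S`: nonzero elements not expressible as the
sum of two nonzero elements of `S`. -/
def minGens (S : Set ℤ) : Set ℤ :=
  {x ∈ S | x ≠ 0 ∧ ∀ a ∈ S, ∀ b ∈ S, a ≠ 0 → b ≠ 0 → x ≠ a + b}

/-- The embedding dimension: the number of minimal generators. -/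
noncomputable def embdim (S : Set ℤ) : ℕ := (minGens S).ncard

/-- The gluing `⟨x S₁, y S₂⟩` of two numerical semigroups. -/
def glue (x y : ℤ) (S₁ S₂ : Set ℤ) : Set ℤ :=
  {z : ℤ | ∃ a ∈ S₁, ∃ b ∈ S₂, z = x * a + y * b}

lemma frob_greatest {S : Set ℤ} (h : IsNumericalSemigroup S) :
    frob S ∉ S ∧ ∀ z, z ∉ S → z ≤ frob S := by
  obtain ⟨hpos, h0, hadd, hfin⟩ := h
  have hbdd : ∃ b : ℤ, ∀ z : ℤ, z ∉ S → z ≤ b := by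
    obtain ⟨b, hb⟩ := (hfin.bddAbove)
    refine ⟨max b 0, fun z hz => ?_⟩
    rcases le_or_gt z 0 with h | h
    · exact le_trans h (le_max_right _ _)
    · exact le_trans (hb ⟨le_of_lt h, hz⟩) (le_max_left _ _)
  have hne : ∃ z : ℤ, z ∉ S := ⟨-1, fun hc => absurd (hpos _ hc) (by norm_num)⟩
  obtain ⟨ub, hub, hub'⟩ := Int.exists_greatest_of_bdd hbdd hne
  have : frob S = ub := IsGreatest.csSup_eq ⟨hub, fun z hz => hub' z hz⟩
  rw [this]; exact ⟨hub, hub'⟩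

lemma mem_of_gt_frob {S : Set ℤ} (h : IsNumericalSemigroup S) {z : ℤ} (hz : frob S < z) :
    z ∈ S := by
  by_contra hc; exact absurd ((frob_greatest h).2 z hc) (not_le.mpr hz)

lemma ns_add_nsmul {S : Set ℤ} (h : IsNumericalSemigroup S) {a b : ℤ} (ha : a ∈ S) (hb : b ∈ S)
    {k : ℤ} (hk : 0 ≤ k) : a + k * b ∈ S := by
  obtain ⟨n, rfl⟩ := Int.eq_ofNat_of_zero_le hk
  clear hk
  induction n with
  | zero => simpa using ha
  | succ m ih =>
      have : a + (↑(m+1)) * b = (a + m * b) + b := by push_cast; ring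
      rw [this]; exact h.2.2.1 _ ih _ hb

/-- frob of a numerical semigroup is ≥ -1. -/
lemma frob_ge_neg_one {S : Set ℤ} (h : IsNumericalSemigroup S) : -1 ≤ frob S :=
  (frob_greatest h).2 (-1) (fun hc => absurd (h.1 _ hc) (by norm_num))

/-- the Frobenius number is a pseudo-Frobenius number. -/
lemma frob_mem_PF {S : Set ℤ} (h : IsNumericalSemigroup S) : frob S ∈ PF S := by
  refine ⟨(frob_greatest h).1, fun t ht ht0 => ?_⟩
  have h1 : 1 ≤ t := lt_of_le_of_ne (h.1 t ht) (Ne.symm ht0)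
  exact mem_of_gt_frob h (by linarith)

/-- if the type is not 1 there is a pseudo-Frobenius number other than frob. -/
lemma exists_PF_ne_frob {S : Set ℤ} (h : IsNumericalSemigroup S) (ht : typ S ≠ 1) :
    ∃ f ∈ PF S, f ≠ frob S := by
  by_contra hc
  push_neg at hc
  have : PF S = {frob S} := by
    apply Set.eq_singleton_iff_unique_mem.mpr
    exact ⟨frob_mem_PF h, fun f hf => hc f hf⟩
  exact ht (by rw [typ, this, Set.ncard_singleton])

/-- basic facts about a non-frob pseudo-Frobenius number. -/
lemma PF_bounds {S : Set ℤ} (h : IsNumericalSemigroup S) {f : ℤ} (hf : f ∈ PF S)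
    (hne : f ≠ frob S) : 0 ≤ f ∧ f < frob S := by
  obtain ⟨hfn, hfp⟩ := hf
  have hle : f ≤ frob S := (frob_greatest h).2 f hfn
  have hlt : f < frob S := lt_of_le_of_ne hle hne
  refine ⟨?_, hlt⟩
  by_contra hneg
  push_neg at hneg
  have h1 : frob S - f ∈ S := mem_of_gt_frob h (by linarith)
  have h2 : frob S - f ≠ 0 := by intro hc; exact hne (by linarith)
  have := hfp _ h1 h2
  simp only [add_sub_cancel] at this
  exact (frob_greatest h).1 this

section Glue

variable {S₁ S₂ : Set ℤ} {x y : ℤ}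

/-- decomposition of glue membership, using coprimality. -/
lemma glue_decomp (hcop : Int.gcd x y = 1) (hy0 : y ≠ 0) {A B : ℤ}
    (hz : x * A + y * B ∈ glue x y S₁ S₂) :
    ∃ k : ℤ, A - k * y ∈ S₁ ∧ B + k * x ∈ S₂ := by
  obtain ⟨a, ha, b, hb, heq⟩ := hz
  have hxy : IsCoprime x y := Int.isCoprime_iff_gcd_eq_one.mpr hcop
  have hdvd : y ∣ A - a := by
    have : y ∣ x * (A - a) := ⟨b - B, by linarith⟩
    exact (IsCoprime.symm hxy).dvd_of_dvd_mul_left this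
  obtain ⟨k, hk⟩ := hdvd
  have ha' : A - k * y = a := by rw [mul_comm k y]; linarith
  refine ⟨k, by rwa [ha'], ?_⟩
  have hyb : y * (B + k * x) = y * b := by
    have hx : x * (A - a) = y * (b - B) := by linarith
    rw [hk] at hx; ring_nf; ring_nf at hx; linarith
  have := mul_left_cancel₀ hy0 hyb
  rwa [this]

lemma glue_intro {A B : ℤ} (k : ℤ) (h1 : A - k * y ∈ S₁) (h2 : B + k * x ∈ S₂) :
    x * A + y * B ∈ glue x y S₁ S₂ :=
  ⟨A - k * y, h1, B + k * x, h2, by ring⟩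

end Glue

section Glue2

variable {S₁ S₂ : Set ℤ} {x y : ℤ}

/-- every integer beyond x F₁ + y F₂ + x y is in the glue. -/
lemma glue_mem_of_gt (h₁ : IsNumericalSemigroup S₁) (h₂ : IsNumericalSemigroup S₂)
    (hx2 : 2 ≤ x) (hy2 : 2 ≤ y) (hcop : Int.gcd x y = 1)
    {z : ℤ} (hz : x * frob S₁ + y * frob S₂ + x * y < z) :
    z ∈ glue x y S₁ S₂ := by
  have hxy : IsCoprime x y := Int.isCoprime_iff_gcd_eq_one.mpr hcop
  obtain ⟨u, v, huv⟩ := hxy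
  set A := u * z with hA
  set B := v * z with hB
  have hzeq : z = x * A + y * B := by
    have : (u * x + v * y) * z = z := by rw [huv]; ring
    calc z = (u * x + v * y) * z := this.symm
    _ = x * A + y * B := by ring
  set m := A - frob S₁ - 1 with hm
  set k := m / y with hk
  set a := A - k * y with ha
  have hy0 : (0:ℤ) < y := by linarith
  have hmod : m % y = m - y * k := by rw [hk, Int.emod_def]
  have hr1 : 0 ≤ m % y := Int.emod_nonneg m (by linarith)
  have hr2 : m % y < y := Int.emod_lt_of_pos m hy0
  have haF : frob S₁ < a ∧ a ≤ frob S₁ + y := by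
    constructor <;> [nlinarith [hmod, hr1]; nlinarith [hmod, hr2]]
  have haS : a ∈ S₁ := mem_of_gt_frob h₁ haF.1
  set b := B + k * x with hb
  have hbS : b ∈ S₂ := by
    apply mem_of_gt_frob h₂
    have hxa : x * a + y * b = z := by rw [ha, hb]; nlinarith [hzeq]
    have hxa' : y * b = z - x * a := by linarith
    have : x * a ≤ x * (frob S₁ + y) := by
      apply mul_le_mul_of_nonneg_left haF.2 (by linarith)
    nlinarith
  exact ⟨a, haS, b, hbS, by rw [ha, hb]; nlinarith [hzeq]⟩

/-- the candidate Frobenius number of the glue is not in the glue. -/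
lemma frob_glue_not_mem (h₁ : IsNumericalSemigroup S₁) (h₂ : IsNumericalSemigroup S₂)
    (hy : y ∈ S₁) (hx : x ∈ S₂) (hx2 : 2 ≤ x) (hy2 : 2 ≤ y) (hcop : Int.gcd x y = 1) :
    x * frob S₁ + y * frob S₂ + x * y ∉ glue x y S₁ S₂ := by
  intro hmem
  have hmem' : x * frob S₁ + y * (frob S₂ + x) ∈ glue x y S₁ S₂ := by
    have he : x * frob S₁ + y * (frob S₂ + x) = x * frob S₁ + y * frob S₂ + x * y := by ring
    rwa [he]
  obtain ⟨k, hk1, hk2⟩ := glue_decomp hcop (by linarith) hmem'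
  rcases le_or_gt 0 k with hk0 | hk0
  · -- k ≥ 0 : F₁ = (F₁ - k y) + k y ∈ S₁
    have h' : frob S₁ - k * y + k * y ∈ S₁ := ns_add_nsmul h₁ hk1 hy hk0
    simp only [sub_add_cancel] at h'
    exact (frob_greatest h₁).1 h'
  · -- k ≤ -1 : F₂ = (F₂ + x + k x) + (-(k+1)) x ∈ S₂
    have h' : frob S₂ + x + k * x + (-(k+1)) * x ∈ S₂ :=
      ns_add_nsmul h₂ hk2 hx (by linarith)
    have he : frob S₂ + x + k * x + (-(k+1)) * x = frob S₂ := by ring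
    rw [he] at h'
    exact (frob_greatest h₂).1 h'

/-- the Frobenius number of the glue. -/
lemma frob_glue (h₁ : IsNumericalSemigroup S₁) (h₂ : IsNumericalSemigroup S₂)
    (hy : y ∈ S₁) (hx : x ∈ S₂) (hx2 : 2 ≤ x) (hy2 : 2 ≤ y) (hcop : Int.gcd x y = 1) :
    frob (glue x y S₁ S₂) = x * frob S₁ + y * frob S₂ + x * y := by
  apply IsGreatest.csSup_eq
  constructor
  · exact frob_glue_not_mem h₁ h₂ hy hx hx2 hy2 hcop
  · intro z hz
    by_contra hc
    exact hz (glue_mem_of_gt h₁ h₂ hx2 hy2 hcop (not_le.mp hc))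

end Glue2

section Counting

/-- In an almost symmetric numerical semigroup, every `hole` (a gap `w` with
`F - w` also a gap) is a pseudo-Frobenius number. -/
lemma almost_sym_holes {H : Set ℤ}
    (hpos : ∀ z ∈ H, 0 ≤ z) (h0 : 0 ∈ H) (hadd : ∀ a ∈ H, ∀ b ∈ H, a + b ∈ H)
    (hF : frob H ∉ H) (hFg : ∀ z, z ∉ H → z ≤ frob H) (hFpos : 0 < frob H)
    (hAS : AlmostSymmetric H) {w : ℤ} (hw0 : 0 ≤ w) (hwF : w ≤ frob H)
    (hw : w ∉ H) (hw' : frob H - w ∉ H) : w ∈ PF H := by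
  classical
  set F := frob H with hFdef
  have hgt : ∀ z, F < z → z ∈ H := fun z hz => by
    by_contra hc; exact absurd (hFg z hc) (not_le.mpr hz)
  set I : Finset ℤ := Finset.Icc 0 F with hI
  set G : Finset ℤ := I.filter (fun z => z ∉ H) with hG
  set N : Finset ℤ := I.filter (fun z => z ∈ H) with hN
  set Ho : Finset ℤ := G.filter (fun z => F - z ∉ H) with hHo
  set Pf : Finset ℤ := I.filter (fun z => z ∈ PF H) with hPf
  -- genus = |G|
  have hgenus : genus H = G.card := by
    rw [genus, ← Set.ncard_coe_finset]
    congr 1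
    ext z
    simp only [Set.mem_setOf_eq, hG, hI, Finset.coe_filter, Finset.mem_Icc, Set.mem_setOf_eq]
    constructor
    · rintro ⟨hz0, hzH⟩; exact ⟨⟨hz0, hFg z hzH⟩, hzH⟩
    · rintro ⟨⟨hz0, _⟩, hzH⟩; exact ⟨hz0, hzH⟩
  -- typ = |Pf|
  have hPF0 : ∀ f ∈ PF H, 0 ≤ f := by
    intro f hf
    by_contra hneg
    push_neg at hneg
    have h1 : F - f ∈ H := hgt _ (by linarith)
    have h2 : F - f ≠ 0 := by intro hc; linarith
    have := hf.2 _ h1 h2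
    simp only [add_sub_cancel] at this
    exact hF this
  have htyp : typ H = Pf.card := by
    rw [typ, ← Set.ncard_coe_finset]
    congr 1
    ext z
    simp only [hPf, hI, Finset.coe_filter, Finset.mem_Icc, Set.mem_setOf_eq]
    constructor
    · intro hz; exact ⟨⟨hPF0 z hz, hFg z hz.1⟩, hz⟩
    · rintro ⟨_, hz⟩; exact hz
  -- |G| + |N| = F + 1
  have hIcard : I.card = (F + 1).toNat := by
    rw [hI, Int.card_Icc]; congr 1; ring
  have hGN : G.card + N.card = (F + 1).toNat := by
    have := Finset.card_filter_add_card_filter_not (s := I) (p := fun z => z ∈ H)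
    rw [hIcard] at this
    have hng : I.filter (fun z => ¬ z ∈ H) = G := rfl
    rw [hng, ← hN] at this
    omega
  -- |N| ≤ |G \ Ho|
  have hHoG : Ho ⊆ G := Finset.filter_subset _ _
  have hNle : N.card ≤ (G \ Ho).card := by
    apply Finset.card_le_card_of_injOn (fun z => F - z)
    · intro z hz
      simp only [Finset.mem_coe, hN, Finset.mem_filter, hI, Finset.mem_Icc] at hz
      obtain ⟨⟨hz0, hzF⟩, hzH⟩ := hz
      have h1 : F - z ∉ H := by
        intro hc
        have := hadd _ hzH _ hc
        simp only [add_sub_cancel] at this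
        exact hF this
      simp only [Finset.mem_coe, Finset.mem_sdiff, hHo, hG, Finset.mem_filter, hI, Finset.mem_Icc,
        sub_sub_cancel, not_and]
      refine ⟨⟨⟨by linarith, by linarith⟩, h1⟩, fun _ hc => hc hzH⟩
    · intro a _ b _ hab
      simpa using hab
  have hHoCard : Ho.card + (G \ Ho).card = G.card := by
    rw [Finset.card_sdiff_of_subset hHoG]
    have := Finset.card_le_card hHoG
    omega
  -- Pf ⊆ Ho ∪ {F}
  have hPfsub : Pf ⊆ Ho ∪ {F} := by
    intro z hz
    simp only [hPf, Finset.mem_filter, hI, Finset.mem_Icc] at hz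
    obtain ⟨⟨hz0, hzF⟩, hzPF⟩ := hz
    rcases eq_or_ne z F with rfl | hne
    · exact Finset.mem_union_right _ (Finset.mem_singleton_self _)
    · apply Finset.mem_union_left
      simp only [hHo, hG, Finset.mem_filter, hI, Finset.mem_Icc]
      refine ⟨⟨⟨hz0, hzF⟩, hzPF.1⟩, ?_⟩
      intro hc
      have hne0 : F - z ≠ 0 := fun h => hne (by linarith)
      have := hzPF.2 _ hc hne0
      simp only [add_sub_cancel] at this
      exact hF this
  have hFPf : F ∈ Pf := by
    simp only [hPf, Finset.mem_filter, hI, Finset.mem_Icc]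
    refine ⟨⟨le_of_lt hFpos, le_refl _⟩, hF, fun t ht ht0 => ?_⟩
    have : 1 ≤ t := lt_of_le_of_ne (hpos t ht) (Ne.symm ht0)
    exact hgt _ (by linarith)
  have hFHo : F ∉ Ho := by
    simp only [hHo, Finset.mem_filter, hG, hI, Finset.mem_Icc, sub_self]
    intro hc
    exact hc.2 h0
  have hUcard : (Ho ∪ {F}).card = Ho.card + 1 := by
    rw [Finset.card_union_of_disjoint (Finset.disjoint_singleton_right.mpr hFHo)]
    simp
  -- the card chain
  have hASq : 2 * (G.card : ℤ) = F + Pf.card := by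
    rw [← hgenus, ← htyp]; exact hAS
  have hcast : (G.card : ℤ) + N.card = F + 1 := by
    have h2 : ((F + 1).toNat : ℤ) = F + 1 := Int.toNat_of_nonneg (by linarith)
    rw [← h2]; exact_mod_cast hGN
  have hle1 : (Pf.card : ℤ) ≤ Ho.card + 1 := by
    have := Finset.card_le_card hPfsub
    rw [hUcard] at this
    exact_mod_cast this
  have hle2 : (Ho.card : ℤ) + N.card ≤ G.card := by
    have := hHoCard
    have := hNle
    omega
  have hEq : (Ho ∪ {F}).card ≤ Pf.card := by
    have : (Pf.card : ℤ) = Ho.card + 1 := by omega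
    rw [hUcard]
    exact_mod_cast this.ge
  have hPfEq : Pf = Ho ∪ {F} := Finset.eq_of_subset_of_card_le hPfsub hEq
  -- w is a hole, hence in Pf
  have hwHo : w ∈ Ho := by
    simp only [hHo, hG, Finset.mem_filter, hI, Finset.mem_Icc]
    exact ⟨⟨⟨hw0, hwF⟩, hw⟩, hw'⟩
  have : w ∈ Pf := by rw [hPfEq]; exact Finset.mem_union_left _ hwHo
  simp only [hPf, Finset.mem_filter] at this
  exact this.2

end Counting

section Key

lemma two_le_of_not_minGen {S : Set ℤ} (h : IsNumericalSemigroup S) {t : ℤ}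
    (ht : t ∈ S) (ht' : t ∉ minGens S) (ht0 : t ≠ 0) : 2 ≤ t := by
  have : ¬ (t ≠ 0 ∧ ∀ a ∈ S, ∀ b ∈ S, a ≠ 0 → b ≠ 0 → t ≠ a + b) := by
    intro hc; exact ht' ⟨ht, hc⟩
  push_neg at this
  obtain ⟨a, ha, b, hb, ha0, hb0, heq⟩ := this ht0
  have h1 : 1 ≤ a := lt_of_le_of_ne (h.1 a ha) (Ne.symm ha0)
  have h2 : 1 ≤ b := lt_of_le_of_ne (h.1 b hb) (Ne.symm hb0)
  omega

lemma key_lemma {S₁ S₂ : Set ℤ} (h₁ : IsNumericalSemigroup S₁) (h₂ : IsNumericalSemigroup S₂)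
    {x y : ℤ} (hy : y ∈ S₁) (hx : x ∈ S₂) (hx2 : 2 ≤ x) (hy2 : 2 ≤ y)
    (hcop : Int.gcd x y = 1) (ht1 : typ S₁ ≠ 1) :
    ¬ AlmostSymmetric (glue x y S₁ S₂) := by
  intro hAS
  set H := glue x y S₁ S₂ with hH
  set F₁ := frob S₁ with hF₁
  set F₂ := frob S₂ with hF₂
  have hF₂m : F₂ ∉ S₂ := (frob_greatest h₂).1
  have hF₁m : F₁ ∉ S₁ := (frob_greatest h₁).1
  have hF₂n : -1 ≤ F₂ := frob_ge_neg_one h₂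
  -- the non-frob pseudo-Frobenius number of S₁
  obtain ⟨f₁, hf₁, hf₁ne⟩ := exists_PF_ne_frob h₁ ht1
  obtain ⟨hf₁0, hf₁lt⟩ := PF_bounds h₁ hf₁ hf₁ne
  set d := F₁ - f₁ with hd
  have hd1 : 1 ≤ d := by omega
  have hdS : d ∉ S₁ := by
    intro hc
    have := hf₁.2 d hc (by omega)
    rw [hd] at this
    simp only [add_sub_cancel] at this
    exact hF₁m this
  -- basic facts about H
  have h0H : (0:ℤ) ∈ H := ⟨0, h₁.2.1, 0, h₂.2.1, by ring⟩
  have hposH : ∀ z ∈ H, 0 ≤ z := by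
    rintro z ⟨a, ha, b, hb, rfl⟩
    have := h₁.1 a ha; have := h₂.1 b hb
    positivity
  have haddH : ∀ a ∈ H, ∀ b ∈ H, a + b ∈ H := by
    rintro z ⟨a, ha, b, hb, rfl⟩ z' ⟨a', ha', b', hb', rfl⟩
    exact ⟨a + a', h₁.2.2.1 a ha a' ha', b + b', h₂.2.2.1 b hb b' hb', by ring⟩
  set Fv := x * F₁ + y * F₂ + x * y with hFv
  have hfrobH : frob H = Fv := frob_glue h₁ h₂ hy hx hx2 hy2 hcop
  have hFvm : Fv ∉ H := frob_glue_not_mem h₁ h₂ hy hx hx2 hy2 hcop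
  have hFg : ∀ z, z ∉ H → z ≤ Fv := by
    intro z hz
    by_contra hc
    exact hz (glue_mem_of_gt h₁ h₂ hx2 hy2 hcop (not_le.mp hc))
  have hF₁1 : 1 ≤ F₁ := by omega
  have hFvpos : 0 < Fv := by nlinarith
  -- the hole w = x * d
  set w := x * d with hw
  have hwm : w ∉ H := by
    intro hmem
    have hmem' : x * d + y * 0 ∈ H := by rwa [mul_zero, add_zero]
    obtain ⟨k, hk1, hk2⟩ := glue_decomp hcop (by omega) hmem'
    rw [zero_add] at hk2
    have hk0 : 0 ≤ k := by
      have := h₂.1 _ hk2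
      nlinarith
    have : d - k * y + k * y ∈ S₁ := ns_add_nsmul h₁ hk1 hy hk0
    simp only [sub_add_cancel] at this
    exact hdS this
  have hwm' : Fv - w ∉ H := by
    intro hmem
    have hmem' : x * f₁ + y * (F₂ + x) ∈ H := by
      have he : x * f₁ + y * (F₂ + x) = Fv - w := by rw [hFv, hw, hd]; ring
      rwa [he]
    obtain ⟨k, hk1, hk2⟩ := glue_decomp hcop (by omega) hmem'
    rcases le_or_gt 0 k with hk0 | hk0
    · have : f₁ - k * y + k * y ∈ S₁ := ns_add_nsmul h₁ hk1 hy hk0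
      simp only [sub_add_cancel] at this
      exact hf₁.1 this
    · have h' : F₂ + x + k * x + (-(k+1)) * x ∈ S₂ := ns_add_nsmul h₂ hk2 hx (by omega)
      have he : F₂ + x + k * x + (-(k+1)) * x = F₂ := by ring
      rw [he] at h'
      exact hF₂m h'
  have hwyF : w + y * (F₂ + x) ∉ H := by
    intro hmem
    have hmem' : x * d + y * (F₂ + x) ∈ H := by rwa [← hw]
    obtain ⟨k, hk1, hk2⟩ := glue_decomp hcop (by omega) hmem'
    rcases le_or_gt 0 k with hk0 | hk0
    · have : d - k * y + k * y ∈ S₁ := ns_add_nsmul h₁ hk1 hy hk0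
      simp only [sub_add_cancel] at this
      exact hdS this
    · have h' : F₂ + x + k * x + (-(k+1)) * x ∈ S₂ := ns_add_nsmul h₂ hk2 hx (by omega)
      have he : F₂ + x + k * x + (-(k+1)) * x = F₂ := by ring
      rw [he] at h'
      exact hF₂m h'
  have hwPF : w ∉ PF H := by
    intro hc
    have hmem : y * (F₂ + x) ∈ H := by
      refine ⟨0, h₁.2.1, F₂ + x, mem_of_gt_frob h₂ (by omega), by ring⟩
    have hne : y * (F₂ + x) ≠ 0 := by
      have hpos' : (0:ℤ) < y * (F₂ + x) := by nlinarith
      exact hpos'.ne'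
    exact hwyF (hc.2 _ hmem hne)
  -- bounds on w
  have hw0 : 0 ≤ w := by positivity
  have hwF : w ≤ Fv := by nlinarith
  -- contradiction via the counting lemma
  have : w ∈ PF H := by
    rw [← hfrobH] at hFvm hFg hFvpos hwF hwm'
    exact almost_sym_holes hposH h0H haddH hFvm hFg hFvpos hAS hw0 hwF hwm hwm'
  exact hwPF this

end Key

lemma glue_comm (x y : ℤ) (S₁ S₂ : Set ℤ) : glue x y S₁ S₂ = glue y x S₂ S₁ := by
  ext z
  constructor <;> rintro ⟨a, ha, b, hb, rfl⟩ <;> exact ⟨b, hb, a, ha, by ring⟩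

theorem stmt19 (S₁ S₂ : Set ℤ) (h₁ : IsNumericalSemigroup S₁) (h₂ : IsNumericalSemigroup S₂)
    (x y : ℤ) (hy : y ∈ S₁) (hy' : y ∉ minGens S₁)
    (hx : x ∈ S₂) (hx' : x ∉ minGens S₂) (hcop : Int.gcd x y = 1)
    (hns : typ S₁ ≠ 1 ∨ typ S₂ ≠ 1) :
    ¬ AlmostSymmetric (glue x y S₁ S₂) := by
  have hx0 : x ≠ 0 := by
    rintro rfl
    have : Int.gcd 0 y = y.natAbs := Int.gcd_zero_left y
    rw [this] at hcop
    have hy0 : 0 ≤ y := h₁.1 y hy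
    have hy1 : y = 1 := by omega
    have := two_le_of_not_minGen h₁ hy hy' (by omega)
    omega
  have hy0 : y ≠ 0 := by
    rintro rfl
    have : Int.gcd x 0 = x.natAbs := Int.gcd_zero_right x
    rw [this] at hcop
    have hx0' : 0 ≤ x := h₂.1 x hx
    have hx1 : x = 1 := by omega
    have := two_le_of_not_minGen h₂ hx hx' (by omega)
    omega
  have hx2 : 2 ≤ x := two_le_of_not_minGen h₂ hx hx' hx0
  have hy2 : 2 ≤ y := two_le_of_not_minGen h₁ hy hy' hy0
  rcases hns with ht | ht
  · exact key_lemma h₁ h₂ hy hx hx2 hy2 hcop ht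
  · rw [glue_comm]
    exact key_lemma h₂ h₁ hx hy hy2 hx2 (by rwa [Int.gcd_comm]) ht
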